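/- Let R be a finite local ring with maximal ideal m and residue field F = R/m, and let S = R[X]/(f) where f ∈ R[X] is a monic lift of an irreducible polynomial over F of degree n. Then the trace map Tr : S → R (trace of the multiplication-by-s matrix with respect to the basis 1, ξ, …, ξ^{n-1}) is surjective. -/

import Mathlib

open Polynomial

lemma trace_map_compat {R S F T : Type*} [CommRing R] [CommRing S] [CommRing F] [CommRing T]
    [Algebra R S] [Algebra F T]
    (π : R →+* F) (φ : S →+* T)
    (hcomp : ∀ r, φ (algebraMap R S r) = algebraMap F T (π r))
    {ι : Type*} [Fintype ι] [DecidableEq ι]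
    (b : Module.Basis ι R S) (b' : Module.Basis ι F T) (hb : ∀ i, φ (b i) = b' i) (s : S) :
    π (Algebra.trace R S s) = Algebra.trace F T (φ s) := by
  have hM : Algebra.leftMulMatrix b' (φ s) = (Algebra.leftMulMatrix b s).map π := by
    ext i j
    rw [Algebra.leftMulMatrix_eq_repr_mul, Matrix.map_apply,
      Algebra.leftMulMatrix_eq_repr_mul]
    have h2 : φ s * b' j = ∑ k, π (b.repr (s * b j) k) • b' k := by
      rw [← hb j, ← map_mul]
      conv_lhs => rw [← b.sum_repr (s * b j)]
      rw [map_sum]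
      refine Finset.sum_congr rfl fun k _ => ?_
      rw [Algebra.smul_def, map_mul, hcomp, ← Algebra.smul_def, hb]
    rw [h2]
    exact congrFun (b'.repr_sum_self _) i
  rw [Algebra.trace_eq_matrix_trace b s, Algebra.trace_eq_matrix_trace b' (φ s), hM,
    Matrix.trace, Matrix.trace, map_sum]
  simp [Matrix.diag]

theorem trace_surjective_of_standard_extension
    (R : Type*) [CommRing R] [Fintype R] [IsLocalRing R]
    (f : Polynomial R) (hf : f.Monic)
    (hirr : Irreducible
      (f.map (Ideal.Quotient.mk (IsLocalRing.maximalIdeal R)))) :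
    Function.Surjective (Algebra.trace R (AdjoinRoot f)) := by
  set π := Ideal.Quotient.mk (IsLocalRing.maximalIdeal R) with hπ
  set F := R ⧸ IsLocalRing.maximalIdeal R
  set g := f.map π with hgdef
  have hg : g.Monic := hf.map π
  haveI : Fact (Irreducible g) := ⟨hirr⟩
  haveI : Finite F := Finite.of_surjective π Ideal.Quotient.mk_surjective
  letI : Field F := Ideal.Quotient.field _
  set T := AdjoinRoot g
  haveI : Module.Finite F T := (AdjoinRoot.powerBasis' hg).finite
  -- the quotient ring hom
  have hroot : f.eval₂ ((AdjoinRoot.of g).comp π) (AdjoinRoot.root g) = 0 := by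
    rw [← Polynomial.eval₂_map]
    exact AdjoinRoot.eval₂_root g
  set φ : AdjoinRoot f →+* T :=
    AdjoinRoot.lift ((AdjoinRoot.of g).comp π) (AdjoinRoot.root g) hroot with hφdef
  have hcomp : ∀ r, φ (algebraMap R (AdjoinRoot f) r) = algebraMap F T (π r) := by
    intro r
    rw [AdjoinRoot.algebraMap_eq, hφdef, AdjoinRoot.lift_of, AdjoinRoot.algebraMap_eq]
    rfl
  have hφroot : φ (AdjoinRoot.root f) = AdjoinRoot.root g := AdjoinRoot.lift_root hroot
  have hφsurj : Function.Surjective φ := by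
    intro x
    induction x using AdjoinRoot.induction_on with
    | ih p =>
      obtain ⟨q, hq⟩ := Polynomial.map_surjective π Ideal.Quotient.mk_surjective p
      refine ⟨AdjoinRoot.mk f q, ?_⟩
      rw [hφdef, AdjoinRoot.lift_mk, ← Polynomial.eval₂_map]
      rw [← AdjoinRoot.algebraMap_eq, ← Polynomial.aeval_def, AdjoinRoot.aeval_eq, hq]
  -- the bases
  have hdeg : g.natDegree = f.natDegree := hf.natDegree_map π
  set b : Module.Basis (Fin f.natDegree) R (AdjoinRoot f) := (AdjoinRoot.powerBasis' hf).basis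
  set b' : Module.Basis (Fin f.natDegree) F T :=
    ((AdjoinRoot.powerBasis' hg).basis).reindex (finCongr hdeg)
  have hb : ∀ i, φ (b i) = b' i := by
    intro i
    have h1 : b i = AdjoinRoot.root f ^ (i : ℕ) := (AdjoinRoot.powerBasis' hf).basis_eq_pow i
    have h2 : b' i = AdjoinRoot.root g ^ (i : ℕ) := by
      rw [Module.Basis.reindex_apply]
      have := (AdjoinRoot.powerBasis' hg).basis_eq_pow ((finCongr hdeg).symm i)
      exact this.trans rfl
    rw [h1, h2, map_pow, hφroot]
  -- trace compatibility
  have key : ∀ s : AdjoinRoot f,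
      π (Algebra.trace R (AdjoinRoot f) s) = Algebra.trace F T (φ s) :=
    trace_map_compat π φ hcomp b b' hb
  -- surjectivity over the residue field
  obtain ⟨t, ht⟩ := (Algebra.trace_surjective F T) 1
  obtain ⟨s, hs⟩ := hφsurj t
  have hπtr : π (Algebra.trace R (AdjoinRoot f) s) = 1 := by rw [key, hs, ht]
  have hUnit : IsUnit (Algebra.trace R (AdjoinRoot f) s) := by
    by_contra h
    have hmem : Algebra.trace R (AdjoinRoot f) s ∈ IsLocalRing.maximalIdeal R := h
    have : π (Algebra.trace R (AdjoinRoot f) s) = 0 :=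
      (Ideal.Quotient.eq_zero_iff_mem).mpr hmem
    rw [hπtr] at this
    exact one_ne_zero this
  obtain ⟨u, hu⟩ := hUnit
  intro r
  refine ⟨(r * ↑u⁻¹) • s, ?_⟩
  rw [map_smul, smul_eq_mul, ← hu, mul_assoc, Units.inv_mul, mul_one]
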